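/- Let E be a finite-dimensional real inner product space, X ⊆ E, and x ∈ X. Suppose X is Clarke regular at x, i.e., for every sequence (x_k) in X converging to x one has T_xX ⊆ liminf_k T_{x_k}X. Then x is not apocalyptic: for every sequence (x_k) in X converging to x and every continuously differentiable f : E → ℝ, if s(−∇f(x_k), T_{x_k}X) → 0 then s(−∇f(x), T_xX) = 0. -/

import Mathlib

open Filter Topology

/-- The Bouligand tangent cone of `X ⊆ E` at `x`. -/
def bTangentCone {E : Type*} [NormedAddCommGroup E] [NormedSpace ℝ E]
    (X : Set E) (x : E) : Set E :=
  {v | ∃ (xk : ℕ → E) (τ : ℕ → ℝ), (∀ k, xk k ∈ X) ∧ (∀ k, 0 < τ k) ∧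
    Tendsto τ atTop (𝓝 0) ∧ Tendsto (fun k => (τ k)⁻¹ • (xk k - x)) atTop (𝓝 v)}

/-- The polar of a set `K ⊆ E`: `K° = {w : ⟪w, z⟫ ≤ 0 for all z ∈ K}`. -/
def polarCone {E : Type*} [NormedAddCommGroup E] [InnerProductSpace ℝ E] (K : Set E) : Set E :=
  {w | ∀ z ∈ K, (inner ℝ w z : ℝ) ≤ 0}

/-- The stationarity measure `s(v, K) = max(0, sup{⟪v, z⟫ : z ∈ K, ‖z‖ = 1})`; note that on `ℝ`,
Lean's `sSup` of the empty set is `0`, matching the convention `sup ∅ = 0`. -/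
noncomputable def statMeasure {E : Type*} [NormedAddCommGroup E] [InnerProductSpace ℝ E]
    (v : E) (K : Set E) : ℝ :=
  max 0 (sSup {t : ℝ | ∃ z ∈ K, ‖z‖ = 1 ∧ (inner ℝ v z : ℝ) = t})

/-- The outer limit `limsup_k S_k`: points `u` for which there are a strictly increasing sequence
of indices `(k_i)` and points `u_i ∈ S_{k_i}` with `u_i → u`. -/
def outerLimit {E : Type*} [NormedAddCommGroup E] (S : ℕ → Set E) : Set E :=
  {u | ∃ φ : ℕ → ℕ, StrictMono φ ∧
    ∃ uk : ℕ → E, (∀ i, uk i ∈ S (φ i)) ∧ Tendsto uk atTop (𝓝 u)}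

/-- The inner limit `liminf_k S_k`: points `u` for which there exist `u_k ∈ S_k` with `u_k → u`. -/
def innerLimit {E : Type*} [NormedAddCommGroup E] (S : ℕ → Set E) : Set E :=
  {u | ∃ uk : ℕ → E, (∀ k, uk k ∈ S k) ∧ Tendsto uk atTop (𝓝 u)}


section Aux

variable {E : Type*} [NormedAddCommGroup E] [InnerProductSpace ℝ E]

lemma statMeasure_nonneg (v : E) (K : Set E) : 0 ≤ statMeasure v K := le_max_left _ _

lemma bddAbove_statSet (v : E) (K : Set E) :
    BddAbove {t : ℝ | ∃ z ∈ K, ‖z‖ = 1 ∧ (inner ℝ v z : ℝ) = t} := by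
  refine ⟨‖v‖, ?_⟩
  rintro t ⟨z, hz, hnz, rfl⟩
  calc (inner ℝ v z : ℝ) ≤ ‖v‖ * ‖z‖ := real_inner_le_norm v z
  _ = ‖v‖ := by rw [hnz, mul_one]

lemma inner_le_statMeasure {v u : E} {K : Set E} (hu : u ∈ K) (hn : ‖u‖ = 1) :
    (inner ℝ v u : ℝ) ≤ statMeasure v K :=
  le_max_of_le_right (le_csSup (bddAbove_statSet v K) ⟨u, hu, hn, rfl⟩)

lemma bTangentCone_smul {X : Set E} {y z : E} {c : ℝ} (hc : 0 < c)
    (hz : z ∈ bTangentCone X y) : c • z ∈ bTangentCone X y := by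
  obtain ⟨xk, τ, h1, h2, h3, h4⟩ := hz
  refine ⟨xk, fun k => τ k / c, h1, fun k => div_pos (h2 k) hc, ?_, ?_⟩
  · simpa using h3.div_const c
  · have heq : (fun k => (τ k / c)⁻¹ • (xk k - y)) = fun k => c • ((τ k)⁻¹ • (xk k - y)) := by
      funext k
      rw [smul_smul, div_eq_mul_inv, mul_inv, inv_inv, mul_comm]
    rw [heq]
    exact h4.const_smul c

lemma inner_le_statMeasure_mul_norm (v : E) {X : Set E} {y z : E}
    (hz : z ∈ bTangentCone X y) :
    (inner ℝ v z : ℝ) ≤ statMeasure v (bTangentCone X y) * ‖z‖ := by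
  rcases eq_or_ne z 0 with rfl | hne
  · simp [statMeasure_nonneg]
  · have hn : (0:ℝ) < ‖z‖ := norm_pos_iff.2 hne
    have hu : ‖z‖⁻¹ • z ∈ bTangentCone X y := bTangentCone_smul (inv_pos.2 hn) hz
    have hun : ‖(‖z‖⁻¹ • z)‖ = 1 := by
      rw [norm_smul, Real.norm_eq_abs, abs_of_pos (inv_pos.2 hn), inv_mul_cancel₀ hn.ne']
    have h := inner_le_statMeasure (v := v) hu hun
    rw [real_inner_smul_right] at h
    have := mul_le_mul_of_nonneg_left h hn.le
    rwa [← mul_assoc, mul_inv_cancel₀ hn.ne', one_mul, mul_comm] at this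

lemma continuous_gradient {E : Type*} [NormedAddCommGroup E] [InnerProductSpace ℝ E]
    [CompleteSpace E] {f : E → ℝ} (hf : ContDiff ℝ 1 f) :
    Continuous (fun y => gradient f y) := by
  have h1 : Continuous (fun y => fderiv ℝ f y) := hf.continuous_fderiv one_ne_zero
  exact (InnerProductSpace.toDual ℝ E).symm.continuous.comp h1

end Aux

/-- Let `E` be a finite-dimensional real inner product space, `X ⊆ E`, `x ∈ X`.
Suppose `X` is Clarke regular at `x`: for every sequence `(x_k)` in `X` converging to `x`,
`T_xX ⊆ liminf_k T_{x_k}X`. Then `x` is not apocalyptic: for every sequence `(x_k)` in `X`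
converging to `x` and every continuously differentiable `f : E → ℝ`, if
`s(−∇f(x_k), T_{x_k}X) → 0` then `s(−∇f(x), T_xX) = 0`. -/
theorem stmt11 {E : Type*} [NormedAddCommGroup E] [InnerProductSpace ℝ E] [FiniteDimensional ℝ E]
    (X : Set E) (x : E) (hx : x ∈ X)
    (hreg : ∀ xk : ℕ → E, (∀ k, xk k ∈ X) → Tendsto xk atTop (𝓝 x) →
      bTangentCone X x ⊆ innerLimit fun k => bTangentCone X (xk k)) :
    ∀ (xk : ℕ → E) (f : E → ℝ), (∀ k, xk k ∈ X) → Tendsto xk atTop (𝓝 x) →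
      ContDiff ℝ 1 f →
      Tendsto (fun k => statMeasure (-gradient f (xk k)) (bTangentCone X (xk k))) atTop (𝓝 0) →
      statMeasure (-gradient f x) (bTangentCone X x) = 0 := by
  intro xk f hxkX hxkx hf hstat
  have hcomplete : CompleteSpace E := FiniteDimensional.complete ℝ E
  -- every element of the sup-set is ≤ 0
  have key : ∀ z ∈ bTangentCone X x, ‖z‖ = 1 → (inner ℝ (-gradient f x) z : ℝ) ≤ 0 := by
    intro z hz hzn
    obtain ⟨zk, hzk, hzkz⟩ := hreg xk hxkX hxkx hz
    have hbound : ∀ k, (inner ℝ (-gradient f (xk k)) (zk k) : ℝ) ≤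
        statMeasure (-gradient f (xk k)) (bTangentCone X (xk k)) * ‖zk k‖ := fun k =>
      inner_le_statMeasure_mul_norm _ (hzk k)
    have hgradcont : Continuous (fun y => gradient f y) := continuous_gradient hf
    have hlhs : Tendsto (fun k => (inner ℝ (-gradient f (xk k)) (zk k) : ℝ)) atTop
        (𝓝 (inner ℝ (-gradient f x) z : ℝ)) := by
      have h1 : Tendsto (fun k => -gradient f (xk k)) atTop (𝓝 (-gradient f x)) :=
        ((hgradcont.tendsto x).comp hxkx).neg
      exact (Continuous.inner continuous_fst continuous_snd).continuousAt.tendsto.comp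
        (h1.prodMk_nhds hzkz)
    have hrhs : Tendsto (fun k =>
        statMeasure (-gradient f (xk k)) (bTangentCone X (xk k)) * ‖zk k‖) atTop (𝓝 0) := by
      have := hstat.mul (hzkz.norm)
      simpa using this
    exact le_of_tendsto_of_tendsto hlhs hrhs (Eventually.of_forall hbound)
  have hsup : sSup {t : ℝ | ∃ z ∈ bTangentCone X x, ‖z‖ = 1 ∧
      (inner ℝ (-gradient f x) z : ℝ) = t} ≤ 0 := by
    apply Real.sSup_le
    · rintro t ⟨z, hz, hzn, rfl⟩
      exact key z hz hzn
    · exact le_refl 0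
  unfold statMeasure
  exact max_eq_left hsup
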